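/- Let q ≥ 3 be an odd integer, c = (q−1)/2 ∈ ZMod q, n ≥ 1, and 0 ≤ ℓ ≤ n, 0 ≤ u ≤ n. Let S_ℓ^c = { ω ∈ (ZMod q)ⁿ : exactly ℓ coordinates of ω lie in {c, −c} and the remaining n−ℓ coordinates equal 0 }. Then for every x ∈ (ZMod q)ⁿ having exactly u coordinates in {1, −1} and all other coordinates equal to 0, Σ_{ω ∈ S_ℓ^c} e^{2πi⟨ω,x⟩/q} = 2^ℓ Σ_{j=0}^{ℓ} (−1)^j · binom(u, j) · binom(n−u, ℓ−j) · (cos(π/q))^j, where ⟨ω,x⟩ = Σ_k ω_k x_k ∈ ZMod q. In particular this sum is real. -/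

import Mathlib

open Finset Complex Real

lemma count_lemma {ι : Type*} [Fintype ι] [DecidableEq ι] (A : Finset ι) (ℓ : ℕ)
    (a b : ℂ) (w : ι → ℂ) (hw : ∀ k, w k = if k ∈ A then a else b) :
    ∑ T ∈ Finset.powersetCard ℓ (univ : Finset ι), ∏ k ∈ T, w k
      = ∑ j ∈ Finset.range (ℓ + 1),
          (A.card.choose j : ℂ) * ((Aᶜ.card).choose (ℓ - j)) * a ^ j * b ^ (ℓ - j) := by
  rw [← Finset.sum_fiberwise_of_maps_to (g := fun T => (T ∩ A).card)
      (t := Finset.range (ℓ + 1)) (fun T hT => by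
        simp only [Finset.mem_powersetCard_univ] at hT
        simp only [Finset.mem_range]
        have := Finset.card_le_card (Finset.inter_subset_left (s₁ := T) (s₂ := A))
        omega)]
  refine Finset.sum_congr rfl fun j hj => ?_
  simp only [Finset.mem_range] at hj
  have hjℓ : j ≤ ℓ := by omega
  -- each term in the fiber is constant
  have hconst : ∀ T ∈ (Finset.powersetCard ℓ (univ : Finset ι)).filter
      (fun T => (T ∩ A).card = j), ∏ k ∈ T, w k = a ^ j * b ^ (ℓ - j) := by
    intro T hT
    simp only [Finset.mem_filter, Finset.mem_powersetCard_univ] at hT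
    obtain ⟨hTcard, hTA⟩ := hT
    rw [← Finset.prod_filter_mul_prod_filter_not T (fun k => k ∈ A)]
    have h1 : ∏ k ∈ T.filter (fun k => k ∈ A), w k = a ^ j := by
      rw [Finset.prod_congr rfl (fun k hk => ?_), Finset.prod_const]
      · rw [Finset.filter_mem_eq_inter, hTA]
      · simp only [Finset.mem_filter] at hk
        rw [hw, if_pos hk.2]
    have h2 : ∏ k ∈ T.filter (fun k => ¬ k ∈ A), w k = b ^ (ℓ - j) := by
      rw [Finset.prod_congr rfl (fun k hk => ?_), Finset.prod_const]
      · congr 1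
        have h3 := Finset.card_filter_add_card_filter_not (s := T) (p := fun k => k ∈ A)
        rw [Finset.filter_mem_eq_inter, hTA] at h3
        omega
      · simp only [Finset.mem_filter] at hk
        rw [hw, if_neg hk.2]
    rw [h1, h2]
  rw [Finset.sum_congr rfl hconst, Finset.sum_const, nsmul_eq_mul]
  -- now count the fiber
  have hcount : ((Finset.powersetCard ℓ (univ : Finset ι)).filter
      (fun T => (T ∩ A).card = j)).card
      = (Finset.powersetCard j A ×ˢ Finset.powersetCard (ℓ - j) Aᶜ).card := by
    apply Finset.card_nbij' (i := fun T => (T ∩ A, T \ A)) (j := fun p => p.1 ∪ p.2)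
    · intro T hT
      simp only [Finset.mem_coe, Finset.mem_filter, Finset.mem_powersetCard_univ] at hT
      obtain ⟨hTcard, hTA⟩ := hT
      simp only [Finset.mem_coe, Finset.mem_product, Finset.mem_powersetCard]
      refine ⟨⟨Finset.inter_subset_right, hTA⟩, fun k hk => ?_, ?_⟩
      · simp only [Finset.mem_sdiff] at hk
        simp [hk.2]
      · have := Finset.card_inter_add_card_sdiff T A
        omega
    · intro p hp
      simp only [Finset.mem_coe, Finset.mem_product, Finset.mem_powersetCard] at hp
      obtain ⟨⟨hp1, hp1c⟩, hp2, hp2c⟩ := hp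
      have hdisj : Disjoint p.1 p.2 := by
        refine Finset.disjoint_left.2 fun k hk1 hk2 => ?_
        have := hp1 hk1
        have := hp2 hk2
        simp only [Finset.mem_compl] at this
        exact this (hp1 hk1)
      have hint : (p.1 ∪ p.2) ∩ A = p.1 := by
        rw [Finset.union_inter_distrib_right]
        rw [Finset.inter_eq_left.2 hp1]
        have : p.2 ∩ A = ∅ := by
          refine Finset.eq_empty_of_forall_notMem fun k hk => ?_
          simp only [Finset.mem_inter] at hk
          have := hp2 hk.1
          simp only [Finset.mem_compl] at this
          exact this hk.2
        rw [this, Finset.union_empty]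
      simp only [Finset.mem_coe, Finset.mem_filter, Finset.mem_powersetCard_univ]
      constructor
      · rw [Finset.card_union_of_disjoint hdisj, hp1c, hp2c]; omega
      · rw [hint, hp1c]
    · intro T hT
      simp only [Finset.mem_coe, Finset.mem_filter, Finset.mem_powersetCard_univ] at hT
      exact sup_inf_sdiff T A
    · intro p hp
      simp only [Finset.mem_coe, Finset.mem_product, Finset.mem_powersetCard] at hp
      obtain ⟨⟨hp1, hp1c⟩, hp2, hp2c⟩ := hp
      have hint : (p.1 ∪ p.2) ∩ A = p.1 := by
        rw [Finset.union_inter_distrib_right]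
        rw [Finset.inter_eq_left.2 hp1]
        have : p.2 ∩ A = ∅ := by
          refine Finset.eq_empty_of_forall_notMem fun k hk => ?_
          simp only [Finset.mem_inter] at hk
          have := hp2 hk.1
          simp only [Finset.mem_compl] at this
          exact this hk.2
        rw [this, Finset.union_empty]
      have hsd : (p.1 ∪ p.2) \ A = p.2 := by
        ext k
        simp only [Finset.mem_sdiff, Finset.mem_union]
        constructor
        · rintro ⟨hk1 | hk2, hkA⟩
          · exact absurd (hp1 hk1) hkA
          · exact hk2
        · intro hk
          have := hp2 hk
          simp only [Finset.mem_compl] at this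
          exact ⟨Or.inr hk, this⟩
      exact Prod.ext hint hsd
  rw [hcount, Finset.card_product, Finset.card_powersetCard, Finset.card_powersetCard]
  push_cast
  ring


lemma psum_eq (q m : ℕ) [NeZero q] (hm : q = 2 * m + 1) (hq : 3 ≤ q) :
    ZMod.stdAddChar (N := q) ((m : ZMod q)) + ZMod.stdAddChar (N := q) (-(m : ZMod q))
      = (-2 * Real.cos (Real.pi / q) : ℝ) := by
  have hm1 : 1 ≤ m := by omega
  have hmq : m < q := by omega
  have hq0 : (q : ℂ) ≠ 0 := by
    exact_mod_cast Nat.cast_ne_zero.2 (by omega)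
  have hv1 : ((m : ZMod q)).val = m := ZMod.val_natCast_of_lt hmq
  have hne : (m : ZMod q) ≠ 0 := by
    intro h
    have := (ZMod.natCast_eq_zero_iff _ _).1 h
    have := Nat.le_of_dvd (by omega) this
    omega
  have hv2 : (-(m : ZMod q)).val = m + 1 := by
    rw [ZMod.neg_val, if_neg hne, hv1]
    omega
  rw [ZMod.stdAddChar_apply, ZMod.stdAddChar_apply, ZMod.toCircle_apply, ZMod.toCircle_apply,
    hv1, hv2]
  push_cast
  have hqc : (q : ℂ) = 2 * m + 1 := by exact_mod_cast congrArg (Nat.cast : ℕ → ℂ) hm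
  have e1 : 2 * (π : ℂ) * I * m / q = (π : ℂ) * I + (-((π : ℂ) / q)) * I := by
    field_simp
    rw [hqc]; ring
  have e2 : 2 * (π : ℂ) * I * (m + 1) / q = (π : ℂ) * I + ((π : ℂ) / q) * I := by
    field_simp
    rw [hqc]; ring
  rw [e1, e2, Complex.exp_add, Complex.exp_add, Complex.exp_pi_mul_I]
  have h2c := Complex.two_cos (x := (π : ℂ) / q)
  linear_combination h2c


lemma addChar_map_sum {A : Type*} [AddCommMonoid A] (ψ : AddChar A ℂ) {ι : Type*}
    (s : Finset ι) (f : ι → A) : ψ (∑ i ∈ s, f i) = ∏ i ∈ s, ψ (f i) := by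
  induction s using Finset.cons_induction with
  | empty => simp
  | cons a s ha ih => rw [Finset.sum_cons, Finset.prod_cons, AddChar.map_add_eq_mul, ih]

lemma sigma_mk_eq {ι β : Type*} {S T : Finset ι} (hST : S = T)
    (f : ι → β) (g : (k : ι) → k ∈ T → β) (hfg : ∀ k (h : k ∈ T), f k = g k h) :
    (⟨S, fun k _ => f k⟩ : Σ U : Finset ι, (k : ι) → k ∈ U → β) = ⟨T, g⟩ := by
  subst hST
  exact congrArg (Sigma.mk S) (funext fun k => funext fun h => hfg k h)

theorem stmt13 (q n ℓ u : ℕ) [NeZero q] (hq : 3 ≤ q) (hqo : Odd q) (hn : 1 ≤ n)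
    (hℓ : ℓ ≤ n) (hu : u ≤ n)
    (x : Fin n → ZMod q)
    (hx1 : (Finset.univ.filter fun k => x k = 1 ∨ x k = -1).card = u)
    (hx2 : ∀ k, ¬(x k = 1 ∨ x k = -1) → x k = 0) :
    ∑ ω ∈ Finset.univ.filter (fun ω : Fin n → ZMod q =>
        (Finset.univ.filter fun k =>
          ω k = (((q - 1) / 2 : ℕ) : ZMod q) ∨ ω k = -(((q - 1) / 2 : ℕ) : ZMod q)).card = ℓ ∧
        ∀ k, ¬(ω k = (((q - 1) / 2 : ℕ) : ZMod q) ∨ ω k = -(((q - 1) / 2 : ℕ) : ZMod q)) →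
          ω k = 0),
      Complex.exp (2 * Real.pi * Complex.I * ((∑ k, ω k * x k : ZMod q).val : ℂ) / q)
    = ((2 ^ ℓ * ∑ j ∈ Finset.range (ℓ + 1), (-1 : ℝ) ^ j * (u.choose j) *
        ((n - u).choose (ℓ - j)) * Real.cos (Real.pi / q) ^ j : ℝ) : ℂ) := by
  classical
  obtain ⟨m, hm⟩ := hqo
  have hm' : q = 2 * m + 1 := by omega
  have hm1 : 1 ≤ m := by omega
  have hmq : m < q := by omega
  simp only [show (q - 1) / 2 = m by omega]
  set c : ZMod q := (m : ZMod q) with hcdef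
  set ψ : AddChar (ZMod q) ℂ := ZMod.stdAddChar (N := q) with hpsi
  -- basic facts about c
  have hv1 : c.val = m := ZMod.val_natCast_of_lt hmq
  have hc0 : c ≠ 0 := by
    intro h
    have := congrArg ZMod.val h
    rw [hv1, ZMod.val_zero] at this
    omega
  have hv2 : (-c).val = m + 1 := by
    rw [ZMod.neg_val, if_neg hc0, hv1]
    omega
  have hcc : c ≠ -c := by
    intro h
    have := congrArg ZMod.val h
    rw [hv1, hv2] at this
    omega
  have hc0' : (0 : ZMod q) ≠ c ∧ (0 : ZMod q) ≠ -c := by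
    constructor
    · exact fun h => hc0 h.symm
    · intro h
      apply hc0
      have : -c = 0 := h.symm
      simpa using congrArg Neg.neg this
  -- Step 1: rewrite each summand as a product of character values
  have hterm : ∀ ω : Fin n → ZMod q,
      Complex.exp (2 * Real.pi * Complex.I * ((∑ k, ω k * x k : ZMod q).val : ℂ) / q)
        = ∏ k, ψ (ω k * x k) := by
    intro ω
    rw [← addChar_map_sum, hpsi, ZMod.stdAddChar_apply, ZMod.toCircle_apply]
  rw [Finset.sum_congr rfl fun ω _ => hterm ω]
  -- Step 2: reindex the sum by (support, values)
  have step2 : ∑ ω ∈ Finset.univ.filter (fun ω : Fin n → ZMod q =>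
        (Finset.univ.filter fun k => ω k = c ∨ ω k = -c).card = ℓ ∧
        ∀ k, ¬(ω k = c ∨ ω k = -c) → ω k = 0), ∏ k, ψ (ω k * x k)
      = ∑ p ∈ (Finset.powersetCard ℓ (univ : Finset (Fin n))).sigma
          (fun T => T.pi (fun _ => ({c, -c} : Finset (ZMod q)))),
          ∏ k ∈ p.1.attach, ψ (p.2 k.1 k.2 * x k.1) := by
    apply Finset.sum_nbij'
      (i := fun ω => ⟨Finset.univ.filter (fun k => ω k = c ∨ ω k = -c), fun k _ => ω k⟩)
      (j := fun p k => if h : k ∈ p.1 then p.2 k h else 0)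
    · intro ω hω
      simp only [Finset.mem_filter, Finset.mem_univ, true_and] at hω
      simp only [Finset.mem_sigma, Finset.mem_powersetCard_univ, Finset.mem_pi]
      refine ⟨hω.1, fun k hk => ?_⟩
      simp only [Finset.mem_filter, Finset.mem_univ, true_and] at hk
      rcases hk with h | h <;> simp [h]
    · intro p hp
      simp only [Finset.mem_sigma, Finset.mem_powersetCard_univ, Finset.mem_pi] at hp
      have hfil : Finset.univ.filter (fun k =>
          (if h : k ∈ p.1 then p.2 k h else 0) = c ∨
          (if h : k ∈ p.1 then p.2 k h else 0) = -c) = p.1 := by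
        ext k
        simp only [Finset.mem_filter, Finset.mem_univ, true_and]
        by_cases h : k ∈ p.1
        · rw [dif_pos h]
          have := hp.2 k h
          simp only [Finset.mem_insert, Finset.mem_singleton] at this
          simp [h, this]
        · rw [dif_neg h]
          simp only [h, iff_false]
          rintro (h0 | h0)
          · exact hc0'.1 h0
          · exact hc0'.2 h0
      simp only [Finset.mem_filter, Finset.mem_univ, true_and]
      constructor
      · rw [hfil]; exact hp.1
      · intro k hk
        by_cases h : k ∈ p.1
        · exfalso
          apply hk
          rw [dif_pos h]
          have := hp.2 k h
          simp only [Finset.mem_insert, Finset.mem_singleton] at this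
          exact this
        · rw [dif_neg h]
    · intro ω hω
      simp only [Finset.mem_filter, Finset.mem_univ, true_and] at hω
      funext k
      by_cases h : k ∈ Finset.univ.filter (fun k => ω k = c ∨ ω k = -c)
      · rw [dif_pos h]
      · rw [dif_neg h]
        simp only [Finset.mem_filter, Finset.mem_univ, true_and] at h
        exact (hω.2 k h).symm
    · intro p hp
      simp only [Finset.mem_sigma, Finset.mem_powersetCard_univ, Finset.mem_pi] at hp
      have hfil : Finset.univ.filter (fun k =>
          (if h : k ∈ p.1 then p.2 k h else 0) = c ∨
          (if h : k ∈ p.1 then p.2 k h else 0) = -c) = p.1 := by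
        ext k
        simp only [Finset.mem_filter, Finset.mem_univ, true_and]
        by_cases h : k ∈ p.1
        · rw [dif_pos h]
          have := hp.2 k h
          simp only [Finset.mem_insert, Finset.mem_singleton] at this
          simp [h, this]
        · rw [dif_neg h]
          simp only [h, iff_false]
          rintro (h0 | h0)
          · exact hc0'.1 h0
          · exact hc0'.2 h0
      exact sigma_mk_eq hfil _ p.2 (fun k h => dif_pos h)
    · intro ω hω
      simp only [Finset.mem_filter, Finset.mem_univ, true_and] at hω
      rw [Finset.prod_attach _ (fun k => ψ (ω k * x k))]
      symm
      apply Finset.prod_subset (Finset.subset_univ _)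
      intro k _ hk
      simp only [Finset.mem_filter, Finset.mem_univ, true_and] at hk
      rw [hω.2 k hk, zero_mul, AddChar.map_zero_eq_one]
  rw [step2, Finset.sum_sigma]
  -- Step 3: evaluate the inner sums as products
  have step3 : ∀ T ∈ Finset.powersetCard ℓ (univ : Finset (Fin n)),
      ∑ p ∈ T.pi (fun _ => ({c, -c} : Finset (ZMod q))),
        ∏ k ∈ T.attach, ψ (p k.1 k.2 * x k.1)
      = ∏ a ∈ T, (ψ (c * x a) + ψ (-c * x a)) := by
    intro T _
    rw [← Finset.prod_sum T (fun _ => ({c, -c} : Finset (ZMod q))) (fun a b => ψ (b * x a))]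
    exact Finset.prod_congr rfl fun a _ => Finset.sum_pair hcc
  rw [Finset.sum_congr rfl step3]
  -- Step 4: the local factor
  set A : Finset (Fin n) := Finset.univ.filter (fun k => x k = 1 ∨ x k = -1) with hAdef
  have step4 : ∀ a : Fin n, ψ (c * x a) + ψ (-c * x a)
      = if a ∈ A then ((-2 * Real.cos (Real.pi / q) : ℝ) : ℂ) else 2 := by
    intro a
    by_cases ha : a ∈ A
    · rw [if_pos ha]
      simp only [hAdef, Finset.mem_filter, Finset.mem_univ, true_and] at ha
      rcases ha with h | h
      · rw [h, mul_one, mul_one]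
        exact psum_eq q m hm' hq
      · rw [h, mul_neg_one, mul_neg_one, neg_neg, add_comm]
        exact psum_eq q m hm' hq
    · rw [if_neg ha]
      simp only [hAdef, Finset.mem_filter, Finset.mem_univ, true_and] at ha
      rw [hx2 a ha, mul_zero, mul_zero, AddChar.map_zero_eq_one]
      norm_num
  rw [Finset.sum_congr rfl fun T _ => Finset.prod_congr rfl fun a _ => step4 a]
  -- Step 5: the counting lemma
  rw [count_lemma A ℓ _ 2 _ (fun k => rfl)]
  have hAcard : A.card = u := hx1
  have hAccard : Aᶜ.card = n - u := by
    rw [Finset.card_compl, hAcard, Fintype.card_fin]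
  rw [hAcard, hAccard]
  -- Step 6: final algebra
  push_cast
  rw [Finset.mul_sum]
  refine Finset.sum_congr rfl fun j hj => ?_
  simp only [Finset.mem_range] at hj
  have hjℓ : j ≤ ℓ := by omega
  have h2 : (2 : ℂ) ^ j * 2 ^ (ℓ - j) = 2 ^ ℓ := by
    rw [← pow_add, Nat.add_sub_cancel' hjℓ]
  rw [mul_pow]
  rw [show ((-2 : ℂ)) ^ j = (-1) ^ j * 2 ^ j by rw [neg_pow]]
  linear_combination ((u.choose j : ℂ) * ((n - u).choose (ℓ - j)) * (-1) ^ j *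
    (Complex.cos ((Real.pi : ℂ) / q)) ^ j) * h2
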